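/- arXiv:1108.5030 — 7 statements merged into one kernel-verified Lean document; each statement's English description precedes it below -/
import Mathlib

section
/- Let (G,P) be a quasi-lattice ordered group and suppose F ⊆ P \ {e} is a finite set with FP = P \ {e} (a FESSPE). For x ∈ P, let 1_x : P → ℂ denote the characteristic function of the set {t ∈ P : x ≤ t} = xP. Then for every x ∈ P, the pointwise product ∏_{a ∈ F} (1_x − 1_{xa}) equals the characteristic function of the singleton {x}. -/
open Classical

/-- If `F` is a FESSPE for the quasi-lattice ordered group `(G, P)`, then for every
`x ∈ P` the pointwise product `∏_{a ∈ F} (1_x − 1_{xa})` of functions on `P`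
equals the characteristic function of the singleton `{x}`.
Here `1_s : P → ℂ` is the indicator of `{t ∈ P : s ≤ t}`, i.e. of `s⁻¹ * t ∈ P`. -/
theorem stmt1 {G : Type*} [Group G] (P : Set G)
    (hone : (1 : G) ∈ P)
    (hmul : ∀ a ∈ P, ∀ b ∈ P, a * b ∈ P)
    (hpos : ∀ a ∈ P, a⁻¹ ∈ P → a = 1)
    (hql : ∀ x y : G, (∃ u ∈ P, x⁻¹ * u ∈ P ∧ y⁻¹ * u ∈ P) →
      ∃ v ∈ P, x⁻¹ * v ∈ P ∧ y⁻¹ * v ∈ P ∧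
        ∀ u ∈ P, x⁻¹ * u ∈ P → y⁻¹ * u ∈ P → v⁻¹ * u ∈ P)
    (F : Finset G) (hF : ↑F ⊆ P \ {1})
    (hFP : {w : G | ∃ a ∈ F, ∃ p ∈ P, w = a * p} = P \ {1}) :
    ∀ x ∈ P, ∀ t : P,
      (∏ a ∈ F, ((if x⁻¹ * (t : G) ∈ P then (1 : ℂ) else 0) -
          (if (x * a)⁻¹ * (t : G) ∈ P then (1 : ℂ) else 0)))
        = if (t : G) = x then (1 : ℂ) else 0 := by
  intro x hx t
  by_cases ht : (t : G) = x
  · rw [if_pos ht]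
    apply Finset.prod_eq_one
    intro a ha
    have haF := hF ha
    have h1 : x⁻¹ * (t : G) ∈ P := by rw [ht]; simpa using hone
    have h2 : (x * a)⁻¹ * (t : G) ∉ P := by
      rw [ht]
      intro h
      have : a⁻¹ ∈ P := by
        have : (x * a)⁻¹ * x = a⁻¹ := by group
        rwa [this] at h
      exact haF.2 (hpos a haF.1 this)
    rw [if_pos h1, if_neg h2]; ring
  · rw [if_neg ht]
    by_cases hxt : x⁻¹ * (t : G) ∈ P
    · -- x⁻¹ t ∈ P \ {1}, so it has a lower bound a ∈ F
      have hne : x⁻¹ * (t : G) ≠ 1 := by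
        intro h
        apply ht
        have := congrArg (x * ·) h
        simpa [mul_assoc] using this
      have hmem : x⁻¹ * (t : G) ∈ {w : G | ∃ a ∈ F, ∃ p ∈ P, w = a * p} := by
        rw [hFP]; exact ⟨hxt, hne⟩
      obtain ⟨a, haF, p, hp, hap⟩ := hmem
      apply Finset.prod_eq_zero haF
      have h2 : (x * a)⁻¹ * (t : G) ∈ P := by
        have : (x * a)⁻¹ * (t : G) = a⁻¹ * (x⁻¹ * (t : G)) := by group
        rw [this, hap]
        simpa using hp
      rw [if_pos hxt, if_pos h2]; ring
    · -- x ≰ t: every factor vanishes; F is nonempty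
      have hFne : F.Nonempty := by
        by_contra h
        rw [Finset.not_nonempty_iff_eq_empty] at h
        subst h
        have : x ∈ P \ {1} → False := by
          rw [← hFP]; rintro ⟨a, ha, -⟩; exact absurd ha (by simp)
        have hx1 : x = 1 := by
          by_contra h1
          exact this ⟨hx, h1⟩
        apply hxt
        rw [hx1]
        simpa using t.2
      obtain ⟨a, haF⟩ := hFne
      apply Finset.prod_eq_zero haF
      have h2 : (x * a)⁻¹ * (t : G) ∉ P := by
        intro h
        apply hxt
        have : x⁻¹ * (t : G) = a * ((x * a)⁻¹ * (t : G)) := by group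
        rw [this]
        exact hmul a (hF haF).1 _ h
      rw [if_neg hxt, if_neg h2]; ring
end

section
/- Let (G,P) be a quasi-lattice ordered group admitting a FESSPE (a finite set F ⊆ P \ {e} with FP = P \ {e}). Then every singleton characteristic function 1_{{x}} for x ∈ P lies in the closed linear span B_P = span{1_s : s ∈ P} inside ℓ∞(P); consequently c₀(P) ⊆ B_P. -/
open Classical

/-- If `(G, P)` is quasi-lattice ordered with a FESSPE, then every singleton indicator
`1_{{x}}` (`x ∈ P`) lies in the closed linear span `B_P` of the indicators
`1_s` of the up-sets `{t ∈ P : s ≤ t}` inside `ℓ∞(P)` (closure taken in the sup norm,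
expressed via uniform approximation); consequently `c₀(P) ⊆ B_P`. -/
theorem stmt2 {G : Type*} [Group G] (P : Set G)
    (hone : (1 : G) ∈ P)
    (hmul : ∀ a ∈ P, ∀ b ∈ P, a * b ∈ P)
    (hpos : ∀ a ∈ P, a⁻¹ ∈ P → a = 1)
    (hql : ∀ x y : G, (∃ u ∈ P, x⁻¹ * u ∈ P ∧ y⁻¹ * u ∈ P) →
      ∃ v ∈ P, x⁻¹ * v ∈ P ∧ y⁻¹ * v ∈ P ∧
        ∀ u ∈ P, x⁻¹ * u ∈ P → y⁻¹ * u ∈ P → v⁻¹ * u ∈ P)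
    (F : Finset G) (hF : ↑F ⊆ P \ {1})
    (hFP : {w : G | ∃ a ∈ F, ∃ p ∈ P, w = a * p} = P \ {1}) :
    (∀ x ∈ P, ∀ ε > (0 : ℝ),
      ∃ g ∈ Submodule.span ℂ
        {f : P → ℂ | ∃ s ∈ P, f = fun t : P => if s⁻¹ * (t : G) ∈ P then (1 : ℂ) else 0},
        ∀ t : P, ‖(if (t : G) = x then (1 : ℂ) else 0) - g t‖ ≤ ε) ∧
    (∀ f : P → ℂ,
      (∀ ε > (0 : ℝ), ∃ g : P → ℂ, (Function.support g).Finite ∧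
        ∀ t : P, ‖f t - g t‖ ≤ ε) →
      ∀ ε > (0 : ℝ),
        ∃ g ∈ Submodule.span ℂ
          {f : P → ℂ | ∃ s ∈ P, f = fun t : P => if s⁻¹ * (t : G) ∈ P then (1 : ℂ) else 0},
          ∀ t : P, ‖f t - g t‖ ≤ ε) := by
  classical
  set S : Set (P → ℂ) :=
    {f : P → ℂ | ∃ s ∈ P, f = fun t : P => if s⁻¹ * (t : G) ∈ P then (1 : ℂ) else 0} with hS
  -- least common upper bound, iff form
  have hlcm : ∀ u ∈ P, ∀ v ∈ P,
      (∃ t ∈ P, u⁻¹ * t ∈ P ∧ v⁻¹ * t ∈ P) →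
      ∃ w ∈ P, ∀ t ∈ P, (u⁻¹ * t ∈ P ∧ v⁻¹ * t ∈ P ↔ w⁻¹ * t ∈ P) := by
    intro u hu v hv hex
    obtain ⟨w, hw, hw1, hw2, hmin⟩ := hql u v hex
    refine ⟨w, hw, fun z hz => ⟨fun h => hmin z hz h.1 h.2, fun hwz => ⟨?_, ?_⟩⟩⟩
    · have := hmul _ hw1 _ hwz
      rwa [show u⁻¹ * w * (w⁻¹ * z) = u⁻¹ * z by group] at this
    · have := hmul _ hw2 _ hwz
      rwa [show v⁻¹ * w * (w⁻¹ * z) = v⁻¹ * z by group] at this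
  -- indicator of finite union of up-sets lies in span
  have key : ∀ n : ℕ, ∀ L : List G, L.length ≤ n → (∀ a ∈ L, a ∈ P) →
      (fun t : P => if ∃ a ∈ L, a⁻¹ * (t : G) ∈ P then (1 : ℂ) else 0) ∈
        Submodule.span ℂ S := by
    intro n
    induction n with
    | zero =>
      intro L hlen _
      have : L = [] := List.length_eq_zero_iff.mp (Nat.le_zero.mp hlen)
      subst this
      have : (fun t : P => if ∃ a ∈ ([] : List G), a⁻¹ * (t : G) ∈ P then (1 : ℂ) else 0)
          = 0 := by funext t; simp
      rw [this]; exact zero_mem _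
    | succ n ih =>
      intro L hlen hLP
      match L with
      | [] =>
        have : (fun t : P => if ∃ a ∈ ([] : List G), a⁻¹ * (t : G) ∈ P then (1 : ℂ) else 0)
            = 0 := by funext t; simp
        rw [this]; exact zero_mem _
      | a :: M =>
        have ha : a ∈ P := hLP a (List.mem_cons_self)
        have hMP : ∀ b ∈ M, b ∈ P := fun b hb => hLP b (List.mem_cons_of_mem _ hb)
        have hMlen : M.length ≤ n := by simpa using Nat.succ_le_succ_iff.mp hlen
        -- list of lcms
        set L' : List G := M.filterMap (fun b =>
          if h : ∃ w ∈ P, ∀ t ∈ P, (a⁻¹ * t ∈ P ∧ b⁻¹ * t ∈ P ↔ w⁻¹ * t ∈ P)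
          then some h.choose else none) with hL'
        have hL'len : L'.length ≤ n := le_trans (List.length_filterMap_le _ _) hMlen
        have hL'P : ∀ c ∈ L', c ∈ P := by
          intro c hc
          rw [hL', List.mem_filterMap] at hc
          obtain ⟨b, hb, hcb⟩ := hc
          split at hcb
          · rename_i h
            obtain ⟨hw, _⟩ := h.choose_spec
            rw [Option.some_inj] at hcb; rwa [hcb] at hw
          · exact absurd hcb (by simp)
        -- key equivalence
        have hiff : ∀ t : P, ((∃ c ∈ L', c⁻¹ * (t : G) ∈ P) ↔
            (a⁻¹ * (t : G) ∈ P ∧ ∃ b ∈ M, b⁻¹ * (t : G) ∈ P)) := by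
          intro t
          constructor
          · rintro ⟨c, hc, hct⟩
            rw [hL', List.mem_filterMap] at hc
            obtain ⟨b, hb, hcb⟩ := hc
            split at hcb
            · rename_i h
              obtain ⟨hw, hiff'⟩ := h.choose_spec
              rw [Option.some_inj] at hcb
              subst hcb
              have := (hiff' (t : G) t.2).mpr hct
              exact ⟨this.1, b, hb, this.2⟩
            · exact absurd hcb (by simp)
          · rintro ⟨hat, b, hb, hbt⟩
            have hex : ∃ w ∈ P, ∀ s ∈ P, (a⁻¹ * s ∈ P ∧ b⁻¹ * s ∈ P ↔ w⁻¹ * s ∈ P) :=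
              hlcm a ha b (hMP b hb) ⟨(t : G), t.2, hat, hbt⟩
            refine ⟨hex.choose, ?_, ?_⟩
            · rw [hL', List.mem_filterMap]
              exact ⟨b, hb, by rw [dif_pos hex]⟩
            · obtain ⟨hw, hiff'⟩ := hex.choose_spec
              exact (hiff' (t : G) t.2).mp ⟨hat, hbt⟩
        -- pointwise identity
        have hfun : (fun t : P => if ∃ c ∈ a :: M, c⁻¹ * (t : G) ∈ P then (1 : ℂ) else 0)
            = (fun t : P => if a⁻¹ * (t : G) ∈ P then (1 : ℂ) else 0)
              + (fun t : P => if ∃ b ∈ M, b⁻¹ * (t : G) ∈ P then (1 : ℂ) else 0)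
              - (fun t : P => if ∃ c ∈ L', c⁻¹ * (t : G) ∈ P then (1 : ℂ) else 0) := by
          funext t
          simp only [Pi.add_apply, Pi.sub_apply]
          have hcons : (∃ c ∈ a :: M, c⁻¹ * (t : G) ∈ P) ↔
              (a⁻¹ * (t : G) ∈ P ∨ ∃ b ∈ M, b⁻¹ * (t : G) ∈ P) := by
            constructor
            · rintro ⟨c, hc, hct⟩
              rcases List.mem_cons.mp hc with hc | hc
              · left; rwa [← hc]
              · right; exact ⟨c, hc, hct⟩
            · rintro (h | ⟨c, hc, hct⟩)
              · exact ⟨a, List.mem_cons_self, h⟩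
              · exact ⟨c, List.mem_cons_of_mem _ hc, hct⟩
          by_cases h1 : a⁻¹ * (t : G) ∈ P <;>
            by_cases h2 : ∃ b ∈ M, b⁻¹ * (t : G) ∈ P <;>
            simp [hcons, hiff t, h1, h2]
        rw [hfun]
        exact sub_mem (add_mem (Submodule.subset_span ⟨a, ha, rfl⟩)
          (ih M hMlen hMP)) (ih L' hL'len hL'P)
  -- singleton indicators are in the span
  have hsingle : ∀ x ∈ P, (fun t : P => if (t : G) = x then (1 : ℂ) else 0) ∈
      Submodule.span ℂ S := by
    intro x hx
    set L : List G := F.toList.map (fun a => x * a) with hLdef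
    have hLP : ∀ c ∈ L, c ∈ P := by
      intro c hc
      rw [hLdef, List.mem_map] at hc
      obtain ⟨b, hb, rfl⟩ := hc
      exact hmul x hx b (hF (by simpa using hb)).1
    have hq_iff : ∀ t : P, ((∃ c ∈ L, c⁻¹ * (t : G) ∈ P) ↔
        (x⁻¹ * (t : G) ∈ P ∧ (t : G) ≠ x)) := by
      intro t
      constructor
      · rintro ⟨c, hc, hct⟩
        rw [hLdef, List.mem_map] at hc
        obtain ⟨b, hb, rfl⟩ := hc
        have hbF : b ∈ F := by simpa using hb
        have hrw : (x * b)⁻¹ * (t : G) = b⁻¹ * (x⁻¹ * (t : G)) := by group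
        rw [hrw] at hct
        have hmem : x⁻¹ * (t : G) ∈ {w : G | ∃ a ∈ F, ∃ p ∈ P, w = a * p} :=
          ⟨b, hbF, b⁻¹ * (x⁻¹ * (t : G)), hct, by group⟩
        rw [hFP] at hmem
        refine ⟨hmem.1, fun h => ?_⟩
        apply hmem.2
        simp [h]
      · rintro ⟨hxt, hne⟩
        have hmem : x⁻¹ * (t : G) ∈ P \ {1} := by
          refine ⟨hxt, fun h => hne ?_⟩
          simp only [Set.mem_singleton_iff] at h
          have : (t : G) = x * (x⁻¹ * (t : G)) := by group
          rw [this, h, mul_one]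
        rw [← hFP] at hmem
        obtain ⟨b, hbF, p, hp, hap⟩ := hmem
        refine ⟨x * b, ?_, ?_⟩
        · rw [hLdef, List.mem_map]
          exact ⟨b, by simpa using hbF, rfl⟩
        · have : (x * b)⁻¹ * (t : G) = b⁻¹ * (x⁻¹ * (t : G)) := by group
          rw [this, hap]
          rwa [show b⁻¹ * (b * p) = p by group]
    have hfun : (fun t : P => if (t : G) = x then (1 : ℂ) else 0)
        = (fun t : P => if x⁻¹ * (t : G) ∈ P then (1 : ℂ) else 0)
          - (fun t : P => if ∃ c ∈ L, c⁻¹ * (t : G) ∈ P then (1 : ℂ) else 0) := by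
      funext t
      simp only [Pi.sub_apply]
      by_cases he : (t : G) = x
      · have hp : x⁻¹ * (t : G) ∈ P := by rw [he]; simpa using hone
        have hnq : ¬ ∃ c ∈ L, c⁻¹ * (t : G) ∈ P := by
          rw [hq_iff t]; exact fun h => h.2 he
        rw [he] at hnq ⊢
        simp [hnq, hone]
      · by_cases hp : x⁻¹ * (t : G) ∈ P
        · have hq : ∃ c ∈ L, c⁻¹ * (t : G) ∈ P := (hq_iff t).mpr ⟨hp, he⟩
          simp [he, hp, hq]
        · have hnq : ¬ ∃ c ∈ L, c⁻¹ * (t : G) ∈ P := by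
            rw [hq_iff t]; exact fun h => hp h.1
          simp [he, hp, hnq]
    rw [hfun]
    exact sub_mem (Submodule.subset_span ⟨x, hx, rfl⟩) (key L.length L le_rfl hLP)
  constructor
  · intro x hx ε hε
    refine ⟨_, hsingle x hx, fun t => ?_⟩
    simpa using hε.le
  · intro f happrox ε hε
    obtain ⟨g, hgfin, hg⟩ := happrox ε hε
    refine ⟨g, ?_, hg⟩
    have hgeq : g = ∑ t ∈ hgfin.toFinset,
        g t • (fun s : P => if (s : G) = (t : G) then (1 : ℂ) else 0) := by
      funext s
      simp only [Finset.sum_apply, Pi.smul_apply, smul_eq_mul, mul_ite, mul_one, mul_zero]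
      have hcong : ∀ t ∈ hgfin.toFinset,
          (if (s : G) = (t : G) then g t else 0) = (if t = s then g t else 0) := by
        intro t _
        congr 1
        simp [Subtype.ext_iff, eq_comm]
      rw [Finset.sum_congr rfl hcong, Finset.sum_ite_eq' hgfin.toFinset s g]
      by_cases hs : s ∈ hgfin.toFinset
      · simp [hs]
      · simp only [hs, if_false]
        have : s ∉ Function.support g := by simpa using hs
        simpa [Function.notMem_support] using this
    rw [hgeq]
    exact Submodule.sum_mem _ fun t _ => Submodule.smul_mem _ _ (hsingle (t : G) t.2)
end

section
/- Let (G,P) be a quasi-lattice ordered group and let T_s for s ∈ P denote the Toeplitz isometries on ℓ²(P) given by T_s ε_t = ε_{st} on the standard orthonormal basis {ε_t}_{t∈P}. Then each T_s is an isometry, s ↦ T_s is a semigroup homomorphism with T_e = 1, and T satisfies Nica covariance: T_s T_s* T_t T_t* = T_{s∨t} T_{s∨t}* when s ∨ t < ∞, and T_s T_s* T_t T_t* = 0 when s and t have no common upper bound in P. -/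
open scoped InnerProductSpace

/-- The Toeplitz representation of a quasi-lattice ordered group `(G, P)`:
if `(ε_t)_{t ∈ P}` is a Hilbert basis of `ℓ²(P)` and `T_s` are the bounded operators
determined by `T_s ε_t = ε_{st}`, then each `T_s` is an isometry, `s ↦ T_s` is a unital
semigroup homomorphism, and `T` is Nica covariant:
`T_s T_s* T_t T_t* = T_{s∨t} T_{s∨t}*` when `s ∨ t < ∞`, and `= 0` otherwise. -/
theorem stmt4 {G : Type*} [Group G] (P : Set G)
    (hone : (1 : G) ∈ P)
    (hmul : ∀ a ∈ P, ∀ b ∈ P, a * b ∈ P)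
    (hpos : ∀ a ∈ P, a⁻¹ ∈ P → a = 1)
    (hql : ∀ x y : G, (∃ u ∈ P, x⁻¹ * u ∈ P ∧ y⁻¹ * u ∈ P) →
      ∃ v ∈ P, x⁻¹ * v ∈ P ∧ y⁻¹ * v ∈ P ∧
        ∀ u ∈ P, x⁻¹ * u ∈ P → y⁻¹ * u ∈ P → v⁻¹ * u ∈ P)
    {H : Type*} [NormedAddCommGroup H] [InnerProductSpace ℂ H] [CompleteSpace H]
    (b : HilbertBasis P ℂ H)
    (T : P → H →L[ℂ] H)
    (hT : ∀ s t : P, T s (b t) = b ⟨(s : G) * (t : G), hmul _ s.2 _ t.2⟩) :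
    (∀ s : P, Isometry (T s)) ∧
    T ⟨1, hone⟩ = 1 ∧
    (∀ s t : P, T s * T t = T ⟨(s : G) * (t : G), hmul _ s.2 _ t.2⟩) ∧
    (∀ s t : P,
      (∀ v, (hv : v ∈ P ∧ (s : G)⁻¹ * v ∈ P ∧ (t : G)⁻¹ * v ∈ P ∧
          ∀ u ∈ P, (s : G)⁻¹ * u ∈ P → (t : G)⁻¹ * u ∈ P → v⁻¹ * u ∈ P) →
        T s * ContinuousLinearMap.adjoint (T s) *
          (T t * ContinuousLinearMap.adjoint (T t)) =
          T ⟨v, hv.1⟩ * ContinuousLinearMap.adjoint (T ⟨v, hv.1⟩)) ∧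
      ((¬ ∃ u ∈ P, (s : G)⁻¹ * u ∈ P ∧ (t : G)⁻¹ * u ∈ P) →
        T s * ContinuousLinearMap.adjoint (T s) *
          (T t * ContinuousLinearMap.adjoint (T t)) = 0)) := by
  classical
  have hext : ∀ (f g : H →L[ℂ] H), (∀ u : P, f (b u) = g (b u)) → f = g := by
    intro f g h
    have hd : Dense (Submodule.span ℂ (Set.range (b : P → H)) : Set H) :=
      Submodule.dense_iff_topologicalClosure_eq_top.mpr b.dense_span
    refine ContinuousLinearMap.ext_on hd ?_
    rintro x ⟨u, rfl⟩
    exact h u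
  have hinner : ∀ i j : P, ⟪b i, b j⟫_ℂ = if i = j then 1 else 0 :=
    orthonormal_iff_ite.mp b.orthonormal
  have hbeq : ∀ (i j : P), (i : G) = (j : G) → b i = b j := by
    intro i j h; congr 1; exact Subtype.ext h
  -- adjoint on basis vectors
  have hadj : ∀ (s u : P), ContinuousLinearMap.adjoint (T s) (b u) =
      if h : (s : G)⁻¹ * u ∈ P then b ⟨(s : G)⁻¹ * u, h⟩ else 0 := by
    intro s u
    by_cases h : (s : G)⁻¹ * u ∈ P
    · rw [dif_pos h]
      apply b.repr.injective
      apply lp.ext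
      funext i
      rw [b.repr_apply_apply, b.repr_apply_apply,
        ContinuousLinearMap.adjoint_inner_right, hT, hinner, hinner]
      by_cases hi : (s : G) * i = u
      · rw [if_pos (Subtype.ext hi), if_pos]
        apply Subtype.ext
        simp [← hi, mul_assoc]
      · rw [if_neg, if_neg]
        · intro he
          apply hi
          have := congrArg Subtype.val he
          simp only at this
          rw [this]; group
        · exact fun he => hi (congrArg Subtype.val he)
    · rw [dif_neg h]
      apply b.repr.injective
      apply lp.ext
      funext i
      rw [b.repr_apply_apply, ContinuousLinearMap.adjoint_inner_right, hT, hinner]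
      simp only [map_zero, lp.coeFn_zero, Pi.zero_apply]
      rw [if_neg]
      intro he
      apply h
      have := congrArg Subtype.val he
      simp only at this
      rw [← this]
      simpa [mul_assoc] using i.2
  -- range projections on basis vectors
  have hQ : ∀ (s u : P), (T s * ContinuousLinearMap.adjoint (T s)) (b u) =
      if (s : G)⁻¹ * u ∈ P then b u else 0 := by
    intro s u
    rw [ContinuousLinearMap.mul_apply, hadj]
    split_ifs with h
    · rw [hT]
      apply hbeq
      simp
    · simp
  -- T*T = 1
  have hTT : ∀ s : P, ContinuousLinearMap.adjoint (T s) * T s = 1 := by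
    intro s
    apply hext
    intro u
    rw [ContinuousLinearMap.mul_apply, hT, hadj, ContinuousLinearMap.one_apply]
    rw [dif_pos]
    · apply hbeq; simp
    · simpa [mul_assoc] using u.2
  refine ⟨?_, ?_, ?_, ?_⟩
  · -- isometry
    intro s
    refine AddMonoidHomClass.isometry_of_norm (T s) fun x => ?_
    have h1 : ⟪T s x, T s x⟫_ℂ = ⟪x, x⟫_ℂ := by
      rw [← ContinuousLinearMap.adjoint_inner_left]
      have h2 := congrArg (fun A : H →L[ℂ] H => A x) (hTT s)
      simp only [ContinuousLinearMap.mul_apply, ContinuousLinearMap.one_apply] at h2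
      rw [h2]
    rw [@norm_eq_sqrt_re_inner ℂ, @norm_eq_sqrt_re_inner ℂ _ _ _ _ x, h1]
  · -- unit
    apply hext
    intro u
    rw [hT, ContinuousLinearMap.one_apply]
    apply hbeq
    simp
  · -- multiplicative
    intro s t
    apply hext
    intro u
    rw [ContinuousLinearMap.mul_apply, hT, hT, hT]
    apply hbeq
    simp [mul_assoc]
  · -- Nica covariance
    intro s t
    constructor
    · rintro v ⟨hv1, hv2, hv3, hv4⟩
      apply hext
      intro u
      rw [ContinuousLinearMap.mul_apply, hQ, hQ]
      by_cases ht : (t : G)⁻¹ * u ∈ P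
      · rw [if_pos ht, hQ]
        by_cases hs : (s : G)⁻¹ * u ∈ P
        · rw [if_pos hs, if_pos (hv4 u u.2 hs ht)]
        · rw [if_neg hs, if_neg]
          intro hvu
          apply hs
          have : (s : G)⁻¹ * u = ((s : G)⁻¹ * v) * (v⁻¹ * u) := by group
          rw [this]
          exact hmul _ hv2 _ hvu
      · rw [if_neg ht, map_zero, if_neg]
        intro hvu
        apply ht
        have : (t : G)⁻¹ * u = ((t : G)⁻¹ * v) * (v⁻¹ * u) := by group
        rw [this]
        exact hmul _ hv3 _ hvu
    · intro hno
      apply hext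
      intro u
      rw [ContinuousLinearMap.mul_apply, hQ, ContinuousLinearMap.zero_apply]
      by_cases ht : (t : G)⁻¹ * u ∈ P
      · rw [if_pos ht, hQ, if_neg]
        intro hs
        exact hno ⟨u, u.2, hs, ht⟩
      · rw [if_neg ht, map_zero]
end

section
/- Let (G,P) be a quasi-lattice ordered group, T : P → B(ℓ²(P)) the Toeplitz representation T_s ε_t = ε_{st}, and D the closed linear span of {T_s T_s* : s ∈ P} (the diagonal subalgebra). Then every bounded operator M on ℓ²(P) commuting with all T_s T_s* (s ∈ P) is a multiplication operator: there exists g ∈ ℓ∞(P) with ‖g‖_∞ ≤ ‖M‖ such that M ε_p = g(p) ε_p for all p ∈ P. -/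
open scoped InnerProductSpace


/-- Lemma 6.11: any bounded operator `M` on `ℓ²(P)` commuting with all the diagonal
projections `T_p T_p*` is a multiplication operator by some `g ∈ ℓ∞(P)` with
`‖g‖_∞ ≤ ‖M‖`. -/
theorem stmt5 {G : Type*} [Group G] (P : Set G)
    (hone : (1 : G) ∈ P)
    (hmul : ∀ a ∈ P, ∀ b ∈ P, a * b ∈ P)
    (hpos : ∀ a ∈ P, a⁻¹ ∈ P → a = 1)
    {H : Type*} [NormedAddCommGroup H] [InnerProductSpace ℂ H] [CompleteSpace H]
    (b : HilbertBasis P ℂ H)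
    (T : P → H →L[ℂ] H)
    (hT : ∀ s t : P, T s (b t) = b ⟨(s : G) * (t : G), hmul _ s.2 _ t.2⟩)
    (M : H →L[ℂ] H)
    (hM : ∀ p : P, M * (T p * ContinuousLinearMap.adjoint (T p)) =
      (T p * ContinuousLinearMap.adjoint (T p)) * M) :
    ∃ g : P → ℂ, (∀ t : P, ‖g t‖ ≤ ‖M‖) ∧ ∀ t : P, M (b t) = g t • b t := by
  classical
  have hext : ∀ x y : H, (∀ i : P, ⟪b i, x⟫_ℂ = ⟪b i, y⟫_ℂ) → x = y := by
    intro x y h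
    apply b.repr.injective
    ext i
    simpa [b.repr_apply_apply] using h i
  have hbb : ∀ i j : P, ⟪b i, b j⟫_ℂ = if i = j then 1 else 0 :=
    orthonormal_iff_ite.mp b.orthonormal
  have hadj : ∀ p q r : P, ⟪b r, ContinuousLinearMap.adjoint (T p) (b q)⟫_ℂ =
      if (⟨(p : G) * r, hmul _ p.2 _ r.2⟩ : P) = q then 1 else 0 := by
    intro p q r
    rw [ContinuousLinearMap.adjoint_inner_right, hT, hbb]
  set Q : P → H →L[ℂ] H := fun p => T p * ContinuousLinearMap.adjoint (T p) with hQdef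
  have hQzero : ∀ p q : P, (¬ ∃ r : P, (q : G) = p * r) → Q p (b q) = 0 := by
    intro p q hn
    have h0 : ContinuousLinearMap.adjoint (T p) (b q) = 0 := by
      apply hext _ 0
      intro r
      rw [hadj]
      have hne : ¬ ((⟨(p : G) * r, hmul _ p.2 _ r.2⟩ : P) = q) := by
        intro h; exact hn ⟨r, by rw [← h]⟩
      simp [hne]
    show T p (ContinuousLinearMap.adjoint (T p) (b q)) = 0
    rw [h0, map_zero]
  have hQid : ∀ p : P, Q p (b p) = b p := by
    intro p
    have h0 : ContinuousLinearMap.adjoint (T p) (b p) = b ⟨1, hone⟩ := by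
      apply hext
      intro r
      rw [hadj, hbb]
      congr 1
      simp only [eq_iff_iff]
      constructor
      · intro h
        have h' := congrArg Subtype.val h
        exact Subtype.ext (mul_eq_left.mp h')
      · intro h; subst h; exact Subtype.ext (mul_one _)
    show T p (ContinuousLinearMap.adjoint (T p) (b p)) = b p
    rw [h0, hT]
    exact congrArg b (Subtype.ext (mul_one _))
  have hQsa : ∀ p : P, ContinuousLinearMap.adjoint (Q p) = Q p := by
    intro p
    show ContinuousLinearMap.adjoint (T p ∘L ContinuousLinearMap.adjoint (T p)) = _
    rw [ContinuousLinearMap.adjoint_comp, ContinuousLinearMap.adjoint_adjoint]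
    rfl
  have hcomm : ∀ p : P, ∀ x : H, M (Q p x) = Q p (M x) := by
    intro p x
    have := congrFun (congrArg (fun (A : H →L[ℂ] H) => (A : H → H)) (hM p)) x
    simpa [hQdef] using this
  have key : ∀ s t : P, s ≠ t → ⟪b s, M (b t)⟫_ℂ = 0 := by
    intro s t hst
    by_contra hne
    have hA : ∃ r : P, (s : G) = t * r := by
      by_contra hnA
      apply hne
      have h1 : M (b t) = Q t (M (b t)) := by
        conv_lhs => rw [← hQid t, hcomm]
      rw [h1, ← ContinuousLinearMap.adjoint_inner_left, hQsa, hQzero t s hnA]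
      simp
    have hB : ∃ r : P, (t : G) = s * r := by
      by_contra hnB
      apply hne
      have h1 : ⟪b s, M (b t)⟫_ℂ = ⟪b s, M (Q s (b t))⟫_ℂ := by
        rw [hcomm, ← ContinuousLinearMap.adjoint_inner_left (Q s), hQsa, hQid s]
      rw [h1, hQzero s t hnB]
      simp
    obtain ⟨r, hr⟩ := hA
    obtain ⟨r', hr'⟩ := hB
    have h2 : (t : G) = t * r * r' := by rw [← hr, ← hr']
    have h3 : (r : G) * r' = 1 := by
      have := h2
      rw [mul_assoc] at this
      have := (mul_eq_left.mp this.symm)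
      exact this
    have hrinv : (r' : G)⁻¹ ∈ P := by
      rw [inv_eq_of_mul_eq_one_left h3]; exact r.2
    have hr1 : (r' : G) = 1 := hpos _ r'.2 hrinv
    apply hst
    apply Subtype.ext
    rw [hr', hr1, mul_one]
  refine ⟨fun t => ⟪b t, M (b t)⟫_ℂ, ?_, ?_⟩
  · intro t
    have hbn : ‖b t‖ = 1 := b.orthonormal.1 t
    calc ‖⟪b t, M (b t)⟫_ℂ‖ ≤ ‖b t‖ * ‖M (b t)‖ := norm_inner_le_norm _ _
      _ ≤ ‖b t‖ * (‖M‖ * ‖b t‖) := by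
          exact mul_le_mul_of_nonneg_left (M.le_opNorm _) (norm_nonneg _)
      _ = ‖M‖ := by rw [hbn]; ring
  · intro t
    apply hext
    intro i
    rw [inner_smul_right, hbb]
    by_cases h : i = t
    · subst h; simp
    · rw [key i t h]; simp [h]
end

section
/- Let (G,P) be a quasi-lattice ordered group with Toeplitz isometries T_s on ℓ²(P), and suppose F ⊆ P \ {e} is a FESSPE. For x ∈ P set p_x = ∏_{a∈F} (T_x T_x* − T_{xa} T_{xa}*). Then p_e is the rank-one projection onto ε_e, and for all x, y ∈ P the operator T_x p_e T_y* is the rank-one operator ε_y ⊗ ε_x (mapping ζ ↦ ε_x ⟨ε_y, ζ⟩). Consequently the C*-algebra T(G,P) generated by {T_s : s ∈ P} contains all compact operators on ℓ²(P). -/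
open scoped ComplexInnerProductSpace

noncomputable def rk1 {H : Type*} [NormedAddCommGroup H] [InnerProductSpace ℂ H] (ξ η : H) :
    H →L[ℂ] H :=
  (ContinuousLinearMap.toSpanSingleton ℂ ξ).comp (innerSL ℂ η)

section rk1

variable {H : Type*} [NormedAddCommGroup H] [InnerProductSpace ℂ H]

lemma rk1_apply (ξ η ζ : H) : rk1 ξ η ζ = ⟪η, ζ⟫ • ξ := rfl

lemma rk1_add_left (ξ ξ' η : H) : rk1 (ξ + ξ') η = rk1 ξ η + rk1 ξ' η := by
  ext ζ; simp [rk1_apply, smul_add]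

lemma rk1_smul_left (c : ℂ) (ξ η : H) : rk1 (c • ξ) η = c • rk1 ξ η := by
  ext ζ; simp only [rk1_apply, ContinuousLinearMap.coe_smul', Pi.smul_apply]; rw [smul_comm]

lemma rk1_zero_left (η : H) : rk1 (0 : H) η = 0 := by
  ext ζ; simp [rk1_apply]

lemma rk1_add_right (ξ η η' : H) : rk1 ξ (η + η') = rk1 ξ η + rk1 ξ η' := by
  ext ζ; simp [rk1_apply, inner_add_left, add_smul]

lemma rk1_smul_right (c : ℂ) (ξ η : H) : rk1 ξ (c • η) = (starRingEnd ℂ c) • rk1 ξ η := by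
  ext ζ; simp [rk1_apply, inner_smul_left, mul_smul]; exact smul_comm _ _ _

lemma rk1_zero_right (ξ : H) : rk1 ξ (0 : H) = 0 := by
  ext ζ; simp [rk1_apply]

lemma rk1_sub_right (ξ η η' : H) : rk1 ξ (η - η') = rk1 ξ η - rk1 ξ η' := by
  ext ζ; simp [rk1_apply, inner_sub_left, sub_smul]

lemma rk1_sub_left (ξ ξ' η : H) : rk1 (ξ - ξ') η = rk1 ξ η - rk1 ξ' η := by
  ext ζ; simp [rk1_apply, smul_sub]

lemma rk1_norm_le (ξ η : H) : ‖rk1 ξ η‖ ≤ ‖ξ‖ * ‖η‖ := by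
  refine ContinuousLinearMap.opNorm_le_bound _ (by positivity) fun ζ => ?_
  rw [rk1_apply, norm_smul]
  calc ‖⟪η, ζ⟫‖ * ‖ξ‖ ≤ (‖η‖ * ‖ζ‖) * ‖ξ‖ := by
        gcongr; exact norm_inner_le_norm _ _
    _ = ‖ξ‖ * ‖η‖ * ‖ζ‖ := by ring

lemma rk1_continuous_right (ξ : H) : Continuous (fun η : H => rk1 ξ η) := by
  refine (LipschitzWith.of_dist_le_mul (K := ‖ξ‖₊) fun η η' => ?_).continuous
  rw [dist_eq_norm, dist_eq_norm, ← rk1_sub_right]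
  simpa using rk1_norm_le ξ (η - η')

lemma rk1_continuous_left (η : H) : Continuous (fun ξ : H => rk1 ξ η) := by
  refine (LipschitzWith.of_dist_le_mul (K := ‖η‖₊) fun ξ ξ' => ?_).continuous
  rw [dist_eq_norm, dist_eq_norm, ← rk1_sub_left]
  calc ‖rk1 (ξ - ξ') η‖ ≤ ‖ξ - ξ'‖ * ‖η‖ := rk1_norm_le _ _
    _ = ‖η‖ * ‖ξ - ξ'‖ := mul_comm _ _

end rk1

set_option maxHeartbeats 1600000 in
/-- If `(G, P)` has a FESSPE `F`, then `p_e = ∏_{a ∈ F} (T_e T_e* − T_a T_a*)` is the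
rank-one projection onto `ε_e`, for `x, y ∈ P` the operator `T_x p_e T_y*` is the
rank-one operator `ζ ↦ ε_x ⟨ε_y, ζ⟩`, and consequently the C*-algebra generated by
the Toeplitz isometries `{T_s : s ∈ P}` contains all compact operators on `ℓ²(P)`. -/
theorem stmt6 {G : Type*} [Group G] (P : Set G)
    (hone : (1 : G) ∈ P)
    (hmul : ∀ a ∈ P, ∀ b ∈ P, a * b ∈ P)
    (hpos : ∀ a ∈ P, a⁻¹ ∈ P → a = 1)
    (hql : ∀ x y : G, (∃ u ∈ P, x⁻¹ * u ∈ P ∧ y⁻¹ * u ∈ P) →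
      ∃ v ∈ P, x⁻¹ * v ∈ P ∧ y⁻¹ * v ∈ P ∧
        ∀ u ∈ P, x⁻¹ * u ∈ P → y⁻¹ * u ∈ P → v⁻¹ * u ∈ P)
    (F : Finset G) (hF : ↑F ⊆ P \ {1})
    (hFP : {w : G | ∃ a ∈ F, ∃ p ∈ P, w = a * p} = P \ {1})
    {H : Type*} [NormedAddCommGroup H] [InnerProductSpace ℂ H] [CompleteSpace H]
    (b : HilbertBasis P ℂ H)
    (T : P → H →L[ℂ] H)
    (hT : ∀ s t : P, T s (b t) = b ⟨(s : G) * (t : G), hmul _ s.2 _ t.2⟩)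
    (pe : H →L[ℂ] H)
    (hpe : pe = (F.attach.toList.map (fun (a : {w : G // w ∈ F}) =>
      T ⟨1, hone⟩ * ContinuousLinearMap.adjoint (T ⟨1, hone⟩) -
      T ⟨(a : G), (hF (Finset.mem_coe.mpr a.2)).1⟩ *
        ContinuousLinearMap.adjoint (T ⟨(a : G), (hF (Finset.mem_coe.mpr a.2)).1⟩))).prod) :
    (∀ ζ : H, pe ζ = ⟪b ⟨1, hone⟩, ζ⟫ • b ⟨1, hone⟩) ∧
    (∀ x y : P, ∀ ζ : H,
      (T x * pe * ContinuousLinearMap.adjoint (T y)) ζ = ⟪b y, ζ⟫ • b x) ∧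
    (∀ K : H →L[ℂ] H, IsCompactOperator K →
      K ∈ (StarAlgebra.adjoin ℂ (Set.range T)).topologicalClosure) := by
  classical
  -- basic tools
  have hbo : ∀ i j : P, ⟪b i, b j⟫ = if i = j then (1 : ℂ) else 0 :=
    orthonormal_iff_ite.mp b.orthonormal
  have hvext : ∀ ξ η : H, (∀ s : P, ⟪b s, ξ⟫ = ⟪b s, η⟫) → ξ = η := by
    intro ξ η h
    apply b.repr.injective
    ext s
    rw [b.repr_apply_apply, b.repr_apply_apply]
    exact h s
  have hdense : Dense ((Submodule.span ℂ (Set.range (b : P → H))) : Set H) :=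
    Submodule.dense_iff_topologicalClosure_eq_top.mpr b.dense_span
  have hCLMext : ∀ A B : H →L[ℂ] H, (∀ t : P, A (b t) = B (b t)) → A = B := by
    intro A B h
    refine ContinuousLinearMap.ext_on hdense ?_
    rintro _ ⟨t, rfl⟩
    exact h t
  -- adjoint formula
  have hTadj : ∀ s t : P, ContinuousLinearMap.adjoint (T s) (b t) =
      if h : (s : G)⁻¹ * (t : G) ∈ P then b ⟨(s : G)⁻¹ * (t : G), h⟩ else 0 := by
    intro s t
    apply hvext
    intro u
    rw [ContinuousLinearMap.adjoint_inner_right, hT, hbo]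
    by_cases h : (s : G)⁻¹ * (t : G) ∈ P
    · rw [dif_pos h, hbo]
      by_cases hu : u = (⟨(s : G)⁻¹ * (t : G), h⟩ : P)
      · rw [if_pos hu, if_pos]
        ext
        simp [hu, mul_inv_cancel_left]
      · rw [if_neg hu, if_neg]
        intro hc
        apply hu
        ext
        have := congrArg (Subtype.val) hc
        simp only at this
        simp [← this, inv_mul_cancel_left]
    · rw [dif_neg h, inner_zero_right, if_neg]
      intro hc
      apply h
      have := congrArg (Subtype.val) hc
      simp only at this
      rw [← this, inv_mul_cancel_left]
      exact u.2
  have hTT : ∀ s t : P, (T s * ContinuousLinearMap.adjoint (T s)) (b t) =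
      if (s : G)⁻¹ * (t : G) ∈ P then b t else 0 := by
    intro s t
    rw [ContinuousLinearMap.mul_apply, hTadj]
    by_cases h : (s : G)⁻¹ * (t : G) ∈ P
    · rw [dif_pos h, if_pos h, hT]
      congr 1
      ext
      simp [mul_inv_cancel_left]
    · rw [dif_neg h, if_neg h, map_zero]
  -- product formula
  have hprod : ∀ (l : List {w : G // w ∈ F}) (t : P),
      ((l.map (fun (a : {w : G // w ∈ F}) =>
        T ⟨1, hone⟩ * ContinuousLinearMap.adjoint (T ⟨1, hone⟩) -
        T ⟨(a : G), (hF (Finset.mem_coe.mpr a.2)).1⟩ *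
          ContinuousLinearMap.adjoint (T ⟨(a : G), (hF (Finset.mem_coe.mpr a.2)).1⟩))).prod) (b t)
      = if (∀ a ∈ l, ¬((a : G)⁻¹ * (t : G) ∈ P)) then b t else 0 := by
    intro l
    induction l with
    | nil => intro t; simp
    | cons a l ih =>
      intro t
      rw [List.map_cons, List.prod_cons, ContinuousLinearMap.mul_apply, ih t]
      by_cases h : ∀ a' ∈ l, ¬((a' : G)⁻¹ * (t : G) ∈ P)
      · rw [if_pos h, ContinuousLinearMap.sub_apply, hTT, hTT]
        have h1 : ((⟨1, hone⟩ : P) : G)⁻¹ * (t : G) ∈ P := by simpa using t.2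
        rw [if_pos h1]
        by_cases ha : (a : G)⁻¹ * (t : G) ∈ P
        · rw [if_pos ha, sub_self, if_neg]
          push_neg
          exact ⟨a, List.mem_cons_self, ha⟩
        · rw [if_neg ha, sub_zero, if_pos]
          intro a' ha'
          rcases List.mem_cons.mp ha' with h' | h'
          · rwa [h']
          · exact h a' h'
      · rw [if_neg h, map_zero, if_neg]
        push_neg at h ⊢
        obtain ⟨a', ha', hp⟩ := h
        exact ⟨a', List.mem_cons_of_mem _ ha', hp⟩
  -- part 1
  have hop : pe = rk1 (b ⟨1, hone⟩) (b ⟨1, hone⟩) := by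
    apply hCLMext
    intro t
    rw [hpe, hprod, rk1_apply, hbo]
    by_cases ht : (⟨1, hone⟩ : P) = t
    · rw [if_pos ht, one_smul, if_pos]
      · rw [← ht]
      intro a _
      intro hc
      have hcP : (a : G)⁻¹ ∈ P := by
        have : (t : G) = 1 := by rw [← ht]
        rwa [this, mul_one] at hc
      have haP : (a : G) ∈ P := (hF (Finset.mem_coe.mpr a.2)).1
      have := hpos _ haP hcP
      exact (hF (Finset.mem_coe.mpr a.2)).2 (Set.mem_singleton_iff.mpr this)
    · rw [if_neg ht, zero_smul, if_neg]
      have htP : (t : G) ∈ P \ {1} := by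
        refine ⟨t.2, ?_⟩
        simp only [Set.mem_singleton_iff]
        intro hc
        exact ht (Subtype.ext hc.symm)
      rw [← hFP] at htP
      obtain ⟨a, haF, p, hp, heq⟩ := htP
      push_neg
      refine ⟨⟨a, haF⟩, Finset.mem_toList.mpr (Finset.mem_attach _ _), ?_⟩
      simpa [heq, inv_mul_cancel_left] using hp
  have h1 : ∀ ζ : H, pe ζ = ⟪b ⟨1, hone⟩, ζ⟫ • b ⟨1, hone⟩ := by
    intro ζ; rw [hop, rk1_apply]
  -- part 2
  have h2 : ∀ x y : P, ∀ ζ : H,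
      (T x * pe * ContinuousLinearMap.adjoint (T y)) ζ = ⟪b y, ζ⟫ • b x := by
    have hmulone : ∀ x : P, T x (b ⟨1, hone⟩) = b x := by
      intro x
      rw [hT]
      congr 1
      exact Subtype.ext (mul_one _)
    intro x y ζ
    rw [ContinuousLinearMap.mul_apply, ContinuousLinearMap.mul_apply, h1, map_smul, hmulone]
    congr 1
    rw [ContinuousLinearMap.adjoint_inner_right, hmulone]
  refine ⟨h1, h2, ?_⟩
  -- part 3
  set A' := (StarAlgebra.adjoin ℂ (Set.range T)).topologicalClosure with hA'
  have hTA : ∀ s : P, T s ∈ A' := fun s =>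
    (StarAlgebra.adjoin ℂ (Set.range T)).le_topologicalClosure
      (StarAlgebra.subset_adjoin ℂ _ ⟨s, rfl⟩)
  have hstarA : ∀ x : H →L[ℂ] H, x ∈ A' → ContinuousLinearMap.adjoint x ∈ A' := by
    intro x hx
    rw [← ContinuousLinearMap.star_eq_adjoint]
    exact star_mem hx
  have hpeA : pe ∈ A' := by
    rw [hpe]
    apply list_prod_mem
    intro x hx
    simp only [List.mem_map] at hx
    obtain ⟨a, -, rfl⟩ := hx
    exact sub_mem (mul_mem (hTA _) (hstarA _ (hTA _))) (mul_mem (hTA _) (hstarA _ (hTA _)))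
  have hrkbb : ∀ x y : P, rk1 (b x) (b y) ∈ A' := by
    intro x y
    have : rk1 (b x) (b y) = T x * pe * ContinuousLinearMap.adjoint (T y) :=
      ContinuousLinearMap.ext fun ζ => by rw [rk1_apply, h2]
    rw [this]
    exact mul_mem (mul_mem (hTA x) hpeA) (hstarA _ (hTA y))
  have hclosedA : IsClosed (A' : Set (H →L[ℂ] H)) :=
    StarSubalgebra.isClosed_topologicalClosure _
  have hrkb : ∀ (x : P) (η : H), rk1 (b x) η ∈ A' := by
    intro x η
    have hC : IsClosed {η : H | rk1 (b x) η ∈ A'} :=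
      hclosedA.preimage (rk1_continuous_right (b x))
    have hsub : ((Submodule.span ℂ (Set.range (b : P → H))) : Set H) ⊆
        {η : H | rk1 (b x) η ∈ A'} := by
      intro η' hη'
      refine Submodule.span_induction ?_ ?_ ?_ ?_ hη'
      · rintro _ ⟨y, rfl⟩; exact hrkbb x y
      · simpa [rk1_zero_right] using zero_mem A'
      · intro u v _ _ hu hv
        rw [Set.mem_setOf_eq, rk1_add_right]
        exact add_mem hu hv
      · intro c u _ hu
        rw [Set.mem_setOf_eq, rk1_smul_right]
        exact SMulMemClass.smul_mem _ hu
    have : η ∈ closure {η : H | rk1 (b x) η ∈ A'} :=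
      closure_mono hsub (hdense η)
    rwa [hC.closure_eq] at this
  have hrk : ∀ ξ η : H, rk1 ξ η ∈ A' := by
    intro ξ η
    have hC : IsClosed {ξ : H | rk1 ξ η ∈ A'} :=
      hclosedA.preimage (rk1_continuous_left η)
    have hsub : ((Submodule.span ℂ (Set.range (b : P → H))) : Set H) ⊆
        {ξ : H | rk1 ξ η ∈ A'} := by
      intro ξ' hξ'
      refine Submodule.span_induction ?_ ?_ ?_ ?_ hξ'
      · rintro _ ⟨x, rfl⟩; exact hrkb x η
      · simpa [rk1_zero_left] using zero_mem A'
      · intro u v _ _ hu hv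
        rw [Set.mem_setOf_eq, rk1_add_left]
        exact add_mem hu hv
      · intro c u _ hu
        rw [Set.mem_setOf_eq, rk1_smul_left]
        exact SMulMemClass.smul_mem _ hu
    have : ξ ∈ closure {ξ : H | rk1 ξ η ∈ A'} :=
      closure_mono hsub (hdense ξ)
    rwa [hC.closure_eq] at this
  intro K hK
  have hK' : IsCompactOperator ⇑(K : H →ₗ[ℂ] H) := hK
  have hKC : IsCompact (closure ((K : H →ₗ[ℂ] H) '' Metric.ball 0 1)) :=
    hK'.isCompact_closure_image_ball 1
  suffices hsuf : ∀ δ : ℝ, 0 < δ → ∃ D ∈ A', ‖K - D‖ ≤ δ by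
    have : K ∈ closure (A' : Set (H →L[ℂ] H)) := by
      rw [Metric.mem_closure_iff]
      intro ε hε
      obtain ⟨D, hD, hKD⟩ := hsuf (ε / 2) (by positivity)
      exact ⟨D, hD, by rw [dist_eq_norm]; linarith⟩
    rwa [hclosedA.closure_eq] at this
  intro δ hδ
  obtain ⟨t, htf, htc⟩ :=
    Metric.totallyBounded_iff.mp hKC.totallyBounded (δ / 4) (by positivity)
  set V : Submodule ℂ H := Submodule.span ℂ t with hV
  haveI : FiniteDimensional ℂ V := FiniteDimensional.span_of_finite ℂ htf
  haveI : CompleteSpace V := FiniteDimensional.complete ℂ V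
  set e := stdOrthonormalBasis ℂ V with he
  set D : H →L[ℂ] H :=
    ∑ i, rk1 ((e i : H)) (ContinuousLinearMap.adjoint K ((e i : H))) with hDdef
  have hD : D ∈ A' := sum_mem fun i _ => hrk _ _
  refine ⟨D, hD, ?_⟩
  have hDP : ∀ w : H, D w = (Submodule.orthogonalProjectionOnto V (K w) : H) := by
    intro w
    rw [e.orthogonalProjectionOnto_apply_eq_sum]
    rw [hDdef]
    rw [ContinuousLinearMap.sum_apply]
    push_cast
    refine Finset.sum_congr rfl fun i _ => ?_
    rw [rk1_apply, ContinuousLinearMap.adjoint_inner_left]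
  have hball : ∀ w : H, ‖w‖ < 1 → ‖(K - D) w‖ ≤ δ / 2 := by
    intro w hw
    have hKw : K w ∈ closure ((K : H →ₗ[ℂ] H) '' Metric.ball 0 1) :=
      subset_closure ⟨w, by simpa [Metric.mem_ball, dist_zero_right] using hw, rfl⟩
    obtain ⟨v, hv, hvK⟩ := Set.mem_iUnion₂.mp (htc hKw)
    have hvV : v ∈ V := Submodule.subset_span hv
    have hdist : ‖K w - v‖ < δ / 4 := by
      rw [Metric.mem_ball, dist_eq_norm] at hvK
      exact hvK
    have hproj : ‖(Submodule.orthogonalProjectionOnto V (K w - v) : H)‖ ≤ ‖K w - v‖ := by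
      calc ‖(Submodule.orthogonalProjectionOnto V (K w - v) : H)‖
          = ‖Submodule.orthogonalProjectionOnto V (K w - v)‖ := rfl
        _ ≤ ‖Submodule.orthogonalProjectionOnto V‖ * ‖K w - v‖ :=
            (Submodule.orthogonalProjectionOnto V).le_opNorm _
        _ ≤ 1 * ‖K w - v‖ := by gcongr; exact Submodule.orthogonalProjectionOnto_norm_le V
        _ = ‖K w - v‖ := one_mul _
    have key : (K - D) w = (K w - v) - ((Submodule.orthogonalProjectionOnto V (K w - v) : H)) := by
      rw [ContinuousLinearMap.sub_apply, hDP]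
      have hPv : Submodule.orthogonalProjectionOnto V v = ⟨v, hvV⟩ := by
        simpa using Submodule.orthogonalProjectionOnto_mem_subspace_eq_self (⟨v, hvV⟩ : V)
      rw [map_sub, hPv]
      push_cast
      abel
    rw [key]
    calc ‖(K w - v) - ((Submodule.orthogonalProjectionOnto V (K w - v) : H))‖
        ≤ ‖K w - v‖ + ‖(Submodule.orthogonalProjectionOnto V (K w - v) : H)‖ := norm_sub_le _ _
      _ ≤ δ / 4 + δ / 4 := add_le_add hdist.le (hproj.trans hdist.le)
      _ = δ / 2 := by ring
  refine ContinuousLinearMap.opNorm_le_of_shell (ε := 1) one_pos hδ.le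
    (c := (2 : ℂ)) (by norm_num) ?_
  intro x hx1 hx2
  have : ‖(K - D) x‖ ≤ δ / 2 := hball x hx2
  have hx : (1 : ℝ) / 2 ≤ ‖x‖ := by
    simpa using hx1
  calc ‖(K - D) x‖ ≤ δ / 2 := this
    _ ≤ δ * ‖x‖ := by nlinarith
end

section
/- Let (G,P) be a quasi-lattice ordered group with a FESSPE F, let x = pq⁻¹ with p,q ∈ P, and let y ∈ P with xy ∉ P but q ∨ y < ∞. Then there exists a ∈ F with q ∨ (ya) = q ∨ y. Consequently, T_p T_q* (T_y T_y* − T_{ya} T_{ya}*) = 0 for this a, where T is the Toeplitz representation on ℓ²(P). -/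
open scoped InnerProductSpace Classical

private lemma adj_apply' {G : Type*} [Group G] (P : Set G)
    (hmul : ∀ a ∈ P, ∀ b ∈ P, a * b ∈ P)
    {H : Type*} [NormedAddCommGroup H] [InnerProductSpace ℂ H] [CompleteSpace H]
    (b : HilbertBasis P ℂ H) (T : P → H →L[ℂ] H)
    (hT : ∀ s t : P, T s (b t) = b ⟨(s : G) * (t : G), hmul _ s.2 _ t.2⟩)
    (s : G) (hs : s ∈ P) (t : P) :
    ContinuousLinearMap.adjoint (T ⟨s, hs⟩) (b t) =
      if h : s⁻¹ * (t : G) ∈ P then b ⟨s⁻¹ * t, h⟩ else 0 := by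
  classical
  apply b.repr.injective
  apply lp.ext
  funext i
  rw [b.repr_apply_apply, ContinuousLinearMap.adjoint_inner_right, hT]
  have horth := orthonormal_iff_ite.mp b.orthonormal
  split_ifs with h
  · rw [b.repr_apply_apply, horth, horth]
    by_cases hi : (i : G) = s⁻¹ * t
    · have h1 : (⟨(⟨s, hs⟩ : P) * i, hmul _ hs _ i.2⟩ : P) = t := by
        apply Subtype.ext; simp [hi]
      have h2 : i = (⟨s⁻¹ * t, h⟩ : P) := Subtype.ext hi
      rw [if_pos h1, if_pos h2]
    · have h1 : (⟨(⟨s, hs⟩ : P) * i, hmul _ hs _ i.2⟩ : P) ≠ t := by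
        intro hc
        apply hi
        have := congrArg Subtype.val hc
        simp at this
        rw [← this]; group
      have h2 : i ≠ (⟨s⁻¹ * t, h⟩ : P) := fun hc => hi (congrArg Subtype.val hc)
      rw [if_neg h1, if_neg h2]
  · rw [horth, if_neg, map_zero]
    · rfl
    · intro hc
      apply h
      have h2 := congrArg Subtype.val hc
      simp only at h2
      have h3 : s⁻¹ * (t : G) = i := by rw [← h2]; group
      rw [h3]
      exact i.2

private lemma proj_apply' {G : Type*} [Group G] (P : Set G)
    (hmul : ∀ a ∈ P, ∀ b ∈ P, a * b ∈ P)
    {H : Type*} [NormedAddCommGroup H] [InnerProductSpace ℂ H] [CompleteSpace H]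
    (b : HilbertBasis P ℂ H) (T : P → H →L[ℂ] H)
    (hT : ∀ s t : P, T s (b t) = b ⟨(s : G) * (t : G), hmul _ s.2 _ t.2⟩)
    (s : G) (hs : s ∈ P) (t : P) :
    (T ⟨s, hs⟩ * ContinuousLinearMap.adjoint (T ⟨s, hs⟩)) (b t) =
      if s⁻¹ * (t : G) ∈ P then b t else 0 := by
  rw [ContinuousLinearMap.mul_apply, adj_apply' P hmul b T hT s hs t]
  split_ifs with h
  · rw [hT]
    exact congrArg b (Subtype.ext (by simp))
  · exact map_zero _

/-- If `(G, P)` has a FESSPE `F`, `p, q, y ∈ P`, `x = pq⁻¹`, `xy ∉ P` and `q ∨ y < ∞`,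
then there exists `a ∈ F` with `q ∨ (ya) = q ∨ y`; consequently, for this `a`,
`T_p T_q* (T_y T_y* − T_{ya} T_{ya}*) = 0` on `ℓ²(P)`. -/
theorem stmt13 {G : Type*} [Group G] (P : Set G)
    (hone : (1 : G) ∈ P)
    (hmul : ∀ a ∈ P, ∀ b ∈ P, a * b ∈ P)
    (hpos : ∀ a ∈ P, a⁻¹ ∈ P → a = 1)
    (hql : ∀ x y : G, (∃ u ∈ P, x⁻¹ * u ∈ P ∧ y⁻¹ * u ∈ P) →
      ∃ v ∈ P, x⁻¹ * v ∈ P ∧ y⁻¹ * v ∈ P ∧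
        ∀ u ∈ P, x⁻¹ * u ∈ P → y⁻¹ * u ∈ P → v⁻¹ * u ∈ P)
    (F : Finset G) (hF : ↑F ⊆ P \ {1})
    (hFP : {w : G | ∃ a ∈ F, ∃ p ∈ P, w = a * p} = P \ {1})
    {H : Type*} [NormedAddCommGroup H] [InnerProductSpace ℂ H] [CompleteSpace H]
    (b : HilbertBasis P ℂ H)
    (T : P → H →L[ℂ] H)
    (hT : ∀ s t : P, T s (b t) = b ⟨(s : G) * (t : G), hmul _ s.2 _ t.2⟩)
    (p q y : G) (hp : p ∈ P) (hq : q ∈ P) (hy : y ∈ P)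
    (hxy : p * q⁻¹ * y ∉ P)
    (v : G)
    (hv : v ∈ P ∧ q⁻¹ * v ∈ P ∧ y⁻¹ * v ∈ P ∧
      ∀ u ∈ P, q⁻¹ * u ∈ P → y⁻¹ * u ∈ P → v⁻¹ * u ∈ P) :
    ∃ a ∈ F, ∃ hya : y * a ∈ P,
      (v ∈ P ∧ q⁻¹ * v ∈ P ∧ (y * a)⁻¹ * v ∈ P ∧
        ∀ u ∈ P, q⁻¹ * u ∈ P → (y * a)⁻¹ * u ∈ P → v⁻¹ * u ∈ P) ∧
      T ⟨p, hp⟩ * ContinuousLinearMap.adjoint (T ⟨q, hq⟩) *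
        (T ⟨y, hy⟩ * ContinuousLinearMap.adjoint (T ⟨y, hy⟩) -
         T ⟨y * a, hya⟩ * ContinuousLinearMap.adjoint (T ⟨y * a, hya⟩)) = 0 := by
  obtain ⟨hvP, hqv, hyv, hleast⟩ := hv
  -- y⁻¹ v ≠ 1
  have hne : y⁻¹ * v ≠ 1 := by
    intro h
    rw [inv_mul_eq_one] at h
    apply hxy
    rw [mul_assoc]
    exact hmul _ hp _ (h ▸ hqv)
  have hmem : y⁻¹ * v ∈ {w : G | ∃ a ∈ F, ∃ p ∈ P, w = a * p} := by
    rw [hFP]; exact ⟨hyv, hne⟩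
  obtain ⟨a, haF, r, hrP, heq⟩ := hmem
  have haP : a ∈ P := (hF haF).1
  have hya : y * a ∈ P := hmul _ hy _ haP
  have hyav : (y * a)⁻¹ * v ∈ P := by
    have h1 : (y * a)⁻¹ * v = a⁻¹ * (y⁻¹ * v) := by group
    rw [h1, heq, inv_mul_cancel_left]
    exact hrP
  have key : ∀ u ∈ P, q⁻¹ * u ∈ P → y⁻¹ * u ∈ P → (y * a)⁻¹ * u ∈ P := by
    intro u huP hqu hyu
    have hvt := hleast u huP hqu hyu
    have h1 : (y * a)⁻¹ * u = ((y * a)⁻¹ * v) * (v⁻¹ * u) := by group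
    rw [h1]
    exact hmul _ hyav _ hvt
  have key2 : ∀ u : G, (y * a)⁻¹ * u ∈ P → y⁻¹ * u ∈ P := by
    intro u hu
    have h1 : y⁻¹ * u = a * ((y * a)⁻¹ * u) := by group
    rw [h1]
    exact hmul _ haP _ hu
  refine ⟨a, haF, hya, ⟨hvP, hqv, hyav, fun u huP hqu hyau =>
    hleast u huP hqu (key2 u hyau)⟩, ?_⟩
  -- operator identity
  have hdense : Dense ((Submodule.span ℂ (Set.range b) : Submodule ℂ H) : Set H) :=
    Submodule.dense_iff_topologicalClosure_eq_top.mpr b.dense_span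
  apply ContinuousLinearMap.ext_on hdense
  rintro w ⟨t, rfl⟩
  rw [ContinuousLinearMap.mul_apply, ContinuousLinearMap.mul_apply,
    ContinuousLinearMap.sub_apply, proj_apply' P hmul b T hT y hy t,
    proj_apply' P hmul b T hT (y * a) hya t, ContinuousLinearMap.zero_apply]
  by_cases hyt : y⁻¹ * (t : G) ∈ P
  · by_cases hyat : (y * a)⁻¹ * (t : G) ∈ P
    · rw [if_pos hyt, if_pos hyat, sub_self, map_zero, map_zero]
    · rw [if_pos hyt, if_neg hyat, sub_zero,
        adj_apply' P hmul b T hT q hq t, dif_neg (fun hqt => hyat (key t t.2 hqt hyt)),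
        map_zero]
  · rw [if_neg hyt, if_neg (fun hc => hyt (key2 t hc)), sub_self, map_zero, map_zero]
end

section
/- Let (G,P) be a quasi-lattice ordered group with a FESSPE F, let p, q ∈ P, x = pq⁻¹, and let y ∈ P with xy ∈ P and q ∨ y < ∞. Then x(q ∨ y) = (xy) ∨ p in P, and the Toeplitz operators satisfy T_p T_q* · T_y T_y* = T_{xy}T_{xy}* · T_p T_q*. -/
/-- If `(G, P)` has a FESSPE, `p, q ∈ P`, `x = pq⁻¹`, and `y ∈ P` satisfies `xy ∈ P`
and `q ∨ y < ∞`, then `x(q ∨ y) = (xy) ∨ p` in `P`, and the Toeplitz operators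
satisfy `T_p T_q* · T_y T_y* = T_{xy} T_{xy}* · T_p T_q*`. -/
theorem stmt18 {G : Type*} [Group G] (P : Set G)
    (hone : (1 : G) ∈ P)
    (hmul : ∀ a ∈ P, ∀ b ∈ P, a * b ∈ P)
    (hpos : ∀ a ∈ P, a⁻¹ ∈ P → a = 1)
    (hql : ∀ x y : G, (∃ u ∈ P, x⁻¹ * u ∈ P ∧ y⁻¹ * u ∈ P) →
      ∃ v ∈ P, x⁻¹ * v ∈ P ∧ y⁻¹ * v ∈ P ∧
        ∀ u ∈ P, x⁻¹ * u ∈ P → y⁻¹ * u ∈ P → v⁻¹ * u ∈ P)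
    (F : Finset G) (hF : ↑F ⊆ P \ {1})
    (hFP : {w : G | ∃ a ∈ F, ∃ p ∈ P, w = a * p} = P \ {1})
    {H : Type*} [NormedAddCommGroup H] [InnerProductSpace ℂ H] [CompleteSpace H]
    (b : HilbertBasis P ℂ H)
    (T : P → H →L[ℂ] H)
    (hT : ∀ s t : P, T s (b t) = b ⟨(s : G) * (t : G), hmul _ s.2 _ t.2⟩)
    (p q y : G) (hp : p ∈ P) (hq : q ∈ P) (hy : y ∈ P)
    (hxy : p * q⁻¹ * y ∈ P)
    (v : G)
    (hv : v ∈ P ∧ q⁻¹ * v ∈ P ∧ y⁻¹ * v ∈ P ∧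
      ∀ u ∈ P, q⁻¹ * u ∈ P → y⁻¹ * u ∈ P → v⁻¹ * u ∈ P) :
    (p * q⁻¹ * v ∈ P ∧ (p * q⁻¹ * y)⁻¹ * (p * q⁻¹ * v) ∈ P ∧
      p⁻¹ * (p * q⁻¹ * v) ∈ P ∧
      ∀ u ∈ P, (p * q⁻¹ * y)⁻¹ * u ∈ P → p⁻¹ * u ∈ P →
        (p * q⁻¹ * v)⁻¹ * u ∈ P) ∧
    T ⟨p, hp⟩ * ContinuousLinearMap.adjoint (T ⟨q, hq⟩) *
        (T ⟨y, hy⟩ * ContinuousLinearMap.adjoint (T ⟨y, hy⟩)) =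
      T ⟨p * q⁻¹ * y, hxy⟩ * ContinuousLinearMap.adjoint (T ⟨p * q⁻¹ * y, hxy⟩) *
        (T ⟨p, hp⟩ * ContinuousLinearMap.adjoint (T ⟨q, hq⟩)) := by
  classical
  obtain ⟨hvP, hqv, hyv, hlub⟩ := hv
  constructor
  · refine ⟨?_, ?_, ?_, ?_⟩
    · have e : p * q⁻¹ * v = p * (q⁻¹ * v) := by group
      rw [e]; exact hmul _ hp _ hqv
    · have e : (p * q⁻¹ * y)⁻¹ * (p * q⁻¹ * v) = y⁻¹ * v := by group
      rw [e]; exact hyv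
    · have e : p⁻¹ * (p * q⁻¹ * v) = q⁻¹ * v := by group
      rw [e]; exact hqv
    · intro u hu h1 h2
      have hu' : q * p⁻¹ * u ∈ P := by
        have e : q * p⁻¹ * u = q * (p⁻¹ * u) := by group
        rw [e]; exact hmul _ hq _ h2
      have key := hlub (q * p⁻¹ * u) hu'
        (by have e : q⁻¹ * (q * p⁻¹ * u) = p⁻¹ * u := by group
            rw [e]; exact h2)
        (by have e : y⁻¹ * (q * p⁻¹ * u) = (p * q⁻¹ * y)⁻¹ * u := by group
            rw [e]; exact h1)
      have e : (p * q⁻¹ * v)⁻¹ * u = v⁻¹ * (q * p⁻¹ * u) := by group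
      rw [e]; exact key
  · -- Adjoint formula on basis vectors
    have hadj : ∀ (s t : P), ContinuousLinearMap.adjoint (T s) (b t) =
        if h : (s : G)⁻¹ * (t : G) ∈ P then b ⟨(s : G)⁻¹ * (t : G), h⟩ else 0 := by
      intro s t
      apply b.repr.injective
      ext i
      rw [b.repr_apply_apply, ContinuousLinearMap.adjoint_inner_right, hT,
        orthonormal_iff_ite.mp b.orthonormal]
      by_cases h : (s : G)⁻¹ * (t : G) ∈ P
      · rw [dif_pos h, b.repr_self, lp.single_apply]
        have hiff : ((⟨(s : G) * (i : G), hmul _ s.2 _ i.2⟩ : P) = t) ↔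
            (i = (⟨(s : G)⁻¹ * (t : G), h⟩ : P)) := by
          constructor
          · intro he
            apply Subtype.ext
            have h2 := congrArg (Subtype.val) he
            simp only at h2
            show (i : G) = (s : G)⁻¹ * (t : G)
            rw [← h2]; group
          · intro he
            apply Subtype.ext
            have h2 := congrArg (Subtype.val) he
            simp only at h2
            show (s : G) * (i : G) = (t : G)
            rw [h2]; group
        simp [hiff, Pi.single_apply]
      · rw [dif_neg h, map_zero]
        have hne : ((⟨(s : G) * (i : G), hmul _ s.2 _ i.2⟩ : P) ≠ t) := by
          intro he
          apply h
          have := congrArg (Subtype.val) he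
          simp only at this
          have e : (s : G)⁻¹ * (t : G) = (i : G) := by rw [← this]; group
          rw [e]; exact i.2
        simp [hne]
    -- Operator identity
    have hDense : Dense ((Submodule.span ℂ (Set.range b) : Submodule ℂ H) : Set H) :=
      Submodule.dense_iff_topologicalClosure_eq_top.mpr b.dense_span
    apply ContinuousLinearMap.ext_on hDense
    rintro x ⟨t, rfl⟩
    simp only [ContinuousLinearMap.mul_apply]
    rw [hadj ⟨y, hy⟩ t]
    by_cases hyt : ((⟨y, hy⟩ : P) : G)⁻¹ * (t : G) ∈ P
    · rw [dif_pos hyt, hT]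
      have e1 : (⟨((⟨y, hy⟩ : P) : G) * ((⟨_, hyt⟩ : P) : G), hmul _ (⟨y, hy⟩ : P).2 _ hyt⟩ : P)
          = t := by
        apply Subtype.ext; show y * (y⁻¹ * (t : G)) = (t : G); group
      rw [e1, hadj ⟨q, hq⟩ t]
      by_cases hqt : ((⟨q, hq⟩ : P) : G)⁻¹ * (t : G) ∈ P
      · rw [dif_pos hqt, hT, hadj]
        have hcond : ((⟨p * q⁻¹ * y, hxy⟩ : P) : G)⁻¹ *
            ((⟨((⟨p, hp⟩ : P) : G) * ((⟨_, hqt⟩ : P) : G),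
              hmul _ (⟨p, hp⟩ : P).2 _ hqt⟩ : P) : G) ∈ P := by
          show (p * q⁻¹ * y)⁻¹ * (p * (q⁻¹ * (t : G))) ∈ P
          have e : (p * q⁻¹ * y)⁻¹ * (p * (q⁻¹ * (t : G))) = y⁻¹ * (t : G) := by group
          rw [e]; exact hyt
        rw [dif_pos hcond, hT]
        congr 1
        apply Subtype.ext
        show p * (q⁻¹ * (t : G)) =
          (p * q⁻¹ * y) * ((p * q⁻¹ * y)⁻¹ * (p * (q⁻¹ * (t : G))))
        group
      · rw [dif_neg hqt]
        simp
    · rw [dif_neg hyt]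
      simp only [map_zero]
      rw [hadj ⟨q, hq⟩ t]
      by_cases hqt : ((⟨q, hq⟩ : P) : G)⁻¹ * (t : G) ∈ P
      · rw [dif_pos hqt, hT, hadj]
        have hcond : ¬ ((⟨p * q⁻¹ * y, hxy⟩ : P) : G)⁻¹ *
            ((⟨((⟨p, hp⟩ : P) : G) * ((⟨_, hqt⟩ : P) : G),
              hmul _ (⟨p, hp⟩ : P).2 _ hqt⟩ : P) : G) ∈ P := by
          show ¬ (p * q⁻¹ * y)⁻¹ * (p * (q⁻¹ * (t : G))) ∈ P
          have e : (p * q⁻¹ * y)⁻¹ * (p * (q⁻¹ * (t : G))) = y⁻¹ * (t : G) := by group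
          rw [e]; exact hyt
        rw [dif_neg hcond]
        simp
      · rw [dif_neg hqt]
        simp
end
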